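/- Let R be a G-graded ring such that every proper graded ideal of R is graded weakly prime. Then every nonzero graded ideal of R/GN(R) is graded prime; equivalently, every proper graded ideal K of R with GN(R) ⊊ K is a graded prime ideal of R. -/

import Mathlib

/-- The additive subgroup generated by all products `a * b` with `a ∈ S`, `b ∈ T`.
For two-sided ideals `I`, `J`, `mulClosure I J` is the ideal product `IJ`. -/
def mulClosure {R : Type*} [NonUnitalRing R] (S T : Set R) : AddSubgroup R :=
  AddSubgroup.closure {x | ∃ a ∈ S, ∃ b ∈ T, a * b = x}

/-- A two-sided ideal of a `G`-graded ring is graded if every homogeneous component of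
every element of the ideal lies in the ideal. -/
def IsGradedIdeal {G R : Type*} [DecidableEq G] [NonUnitalRing R]
    (𝒜 : G → AddSubgroup R) [DirectSum.Decomposition 𝒜] (P : TwoSidedIdeal R) : Prop :=
  ∀ x ∈ P, ∀ g : G, (DirectSum.decompose 𝒜 x g : R) ∈ P

/-- A proper graded ideal `P` is graded prime if `IJ ⊆ P` implies `I ⊆ P` or `J ⊆ P`
for all graded ideals `I`, `J`. -/
def IsGradedPrime {G R : Type*} [DecidableEq G] [NonUnitalRing R]
    (𝒜 : G → AddSubgroup R) [DirectSum.Decomposition 𝒜] (P : TwoSidedIdeal R) : Prop :=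
  P ≠ ⊤ ∧ IsGradedIdeal 𝒜 P ∧
    ∀ I J : TwoSidedIdeal R, IsGradedIdeal 𝒜 I → IsGradedIdeal 𝒜 J →
      (mulClosure (I : Set R) (J : Set R) : Set R) ⊆ (P : Set R) → I ≤ P ∨ J ≤ P

/-- A proper graded ideal `P` is graded weakly prime if `0 ≠ IJ ⊆ P` implies `I ⊆ P` or
`J ⊆ P` for all graded ideals `I`, `J`. -/
def IsGradedWeaklyPrime {G R : Type*} [DecidableEq G] [NonUnitalRing R]
    (𝒜 : G → AddSubgroup R) [DirectSum.Decomposition 𝒜] (P : TwoSidedIdeal R) : Prop :=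
  P ≠ ⊤ ∧ IsGradedIdeal 𝒜 P ∧
    ∀ I J : TwoSidedIdeal R, IsGradedIdeal 𝒜 I → IsGradedIdeal 𝒜 J →
      mulClosure (I : Set R) (J : Set R) ≠ ⊥ →
      (mulClosure (I : Set R) (J : Set R) : Set R) ⊆ (P : Set R) → I ≤ P ∨ J ≤ P

/-- `GP(R)`: the graded prime radical, the intersection of all graded prime ideals
(equal to all of `R` if there are no graded prime ideals). -/
def gradedPrimeRadical {G R : Type*} [DecidableEq G] [NonUnitalRing R]
    (𝒜 : G → AddSubgroup R) [DirectSum.Decomposition 𝒜] : Set R :=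
  ⋂ P ∈ {P : TwoSidedIdeal R | IsGradedPrime 𝒜 P}, (P : Set R)

/-- `GN(R)`: the sum of all graded ideals whose square is zero. -/
def gradedNilSum {G R : Type*} [DecidableEq G] [NonUnitalRing R]
    (𝒜 : G → AddSubgroup R) [DirectSum.Decomposition 𝒜] : TwoSidedIdeal R :=
  sSup {I : TwoSidedIdeal R | IsGradedIdeal 𝒜 I ∧ mulClosure (I : Set R) (I : Set R) = ⊥}

lemma mulClosure_subset_ideal {R : Type*} [NonUnitalRing R] {S T : Set R}
    {P : TwoSidedIdeal R} (h : ∀ a ∈ S, ∀ b ∈ T, a * b ∈ P) :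
    (mulClosure S T : Set R) ⊆ (P : Set R) := by
  intro x hx
  induction hx using AddSubgroup.closure_induction with
  | mem x hx => obtain ⟨a, ha, b, hb, rfl⟩ := hx; exact h a ha b hb
  | zero => exact zero_mem P
  | add x y _ _ hx hy => exact add_mem hx hy
  | neg x _ hx => exact neg_mem hx

lemma mulClosure_eq_bot {R : Type*} [NonUnitalRing R] {S T : Set R}
    (h : ∀ a ∈ S, ∀ b ∈ T, a * b = 0) : mulClosure S T = ⊥ := by
  unfold mulClosure
  rw [eq_bot_iff]
  refine (AddSubgroup.closure_le _).2 ?_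
  rintro x ⟨a, ha, b, hb, rfl⟩
  simp [h a ha b hb]

lemma mul_eq_zero_of_mulClosure {R : Type*} [NonUnitalRing R] {S T : Set R}
    (h : mulClosure S T = ⊥) {a b : R} (ha : a ∈ S) (hb : b ∈ T) : a * b = 0 := by
  have : a * b ∈ mulClosure S T := AddSubgroup.subset_closure ⟨a, ha, b, hb, rfl⟩
  rwa [h, AddSubgroup.mem_bot] at this

lemma isGradedIdeal_sup {G R : Type*} [DecidableEq G] [NonUnitalRing R]
    (𝒜 : G → AddSubgroup R) [DirectSum.Decomposition 𝒜] {I J : TwoSidedIdeal R}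
    (hI : IsGradedIdeal 𝒜 I) (hJ : IsGradedIdeal 𝒜 J) : IsGradedIdeal 𝒜 (I ⊔ J) := by
  intro x hx g
  obtain ⟨y, hy, z, hz, rfl⟩ := TwoSidedIdeal.mem_sup.1 hx
  rw [DirectSum.decompose_add, DirectSum.add_apply, AddSubgroup.coe_add]
  exact add_mem (TwoSidedIdeal.mem_sup_left (hI y hy g))
    (TwoSidedIdeal.mem_sup_right (hJ z hz g))

/-- If every proper graded ideal of `R` is graded weakly prime, then every nonzero graded
ideal of `R/GN(R)` is graded prime; equivalently, every proper graded ideal `K` of `R`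
with `GN(R) ⊊ K` is a graded prime ideal of `R`. -/
theorem stmt_7 {G R : Type*} [Group G] [DecidableEq G] [NonUnitalRing R]
    (𝒜 : G → AddSubgroup R) [DirectSum.Decomposition 𝒜]
    (hmul : ∀ ⦃g h : G⦄ ⦃x y : R⦄, x ∈ 𝒜 g → y ∈ 𝒜 h → x * y ∈ 𝒜 (g * h))
    (hwp : ∀ P : TwoSidedIdeal R, P ≠ ⊤ → IsGradedIdeal 𝒜 P → IsGradedWeaklyPrime 𝒜 P) :
    ∀ K : TwoSidedIdeal R, IsGradedIdeal 𝒜 K → K ≠ ⊤ → gradedNilSum 𝒜 < K →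
      IsGradedPrime 𝒜 K := by
  intro K hK hKtop hlt
  have hwK := hwp K hKtop hK
  refine ⟨hKtop, hK, ?_⟩
  intro I J hI hJ hIJ
  by_cases h0 : mulClosure (I : Set R) (J : Set R) = ⊥
  swap
  · exact hwK.2.2 I J hI hJ h0 hIJ
  by_contra hcon
  push_neg at hcon
  obtain ⟨hIK, hJK⟩ := hcon
  have hJK' : IsGradedIdeal 𝒜 (J ⊔ K) := isGradedIdeal_sup 𝒜 hJ hK
  have hIK' : IsGradedIdeal 𝒜 (I ⊔ K) := isGradedIdeal_sup 𝒜 hI hK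
  -- IK = 0
  have hA : mulClosure (I : Set R) ((J ⊔ K : TwoSidedIdeal R) : Set R) = ⊥ := by
    by_contra hne
    have hsub : (mulClosure (I : Set R) ((J ⊔ K : TwoSidedIdeal R) : Set R) : Set R)
        ⊆ (K : Set R) := by
      refine mulClosure_subset_ideal ?_
      intro a ha b hb
      obtain ⟨y, hy, z, hz, rfl⟩ := TwoSidedIdeal.mem_sup.1 hb
      rw [mul_add, mul_eq_zero_of_mulClosure h0 ha hy, zero_add]
      exact TwoSidedIdeal.mul_mem_left _ _ _ hz
    rcases hwK.2.2 I (J ⊔ K) hI hJK' hne hsub with h | h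
    · exact hIK h
    · exact hJK (le_trans le_sup_left h)
  -- KJ = 0
  have hB : mulClosure ((I ⊔ K : TwoSidedIdeal R) : Set R) (J : Set R) = ⊥ := by
    by_contra hne
    have hsub : (mulClosure ((I ⊔ K : TwoSidedIdeal R) : Set R) (J : Set R) : Set R)
        ⊆ (K : Set R) := by
      refine mulClosure_subset_ideal ?_
      intro a ha b hb
      obtain ⟨y, hy, z, hz, rfl⟩ := TwoSidedIdeal.mem_sup.1 ha
      rw [add_mul, mul_eq_zero_of_mulClosure h0 hy hb, zero_add]
      exact TwoSidedIdeal.mul_mem_right _ _ _ hz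
    rcases hwK.2.2 (I ⊔ K) J hIK' hJ hne hsub with h | h
    · exact hIK (le_trans le_sup_left h)
    · exact hJK h
  -- (I ⊔ K)(J ⊔ K) = 0
  have hC : mulClosure ((I ⊔ K : TwoSidedIdeal R) : Set R)
      ((J ⊔ K : TwoSidedIdeal R) : Set R) = ⊥ := by
    by_contra hne
    have hsub : (mulClosure ((I ⊔ K : TwoSidedIdeal R) : Set R)
        ((J ⊔ K : TwoSidedIdeal R) : Set R) : Set R) ⊆ (K : Set R) := by
      refine mulClosure_subset_ideal ?_
      intro a ha b hb
      obtain ⟨y, hy, z, hz, rfl⟩ := TwoSidedIdeal.mem_sup.1 ha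
      obtain ⟨u, hu, v, hv, rfl⟩ := TwoSidedIdeal.mem_sup.1 hb
      have h1 : y * v = 0 :=
        mul_eq_zero_of_mulClosure hA hy (TwoSidedIdeal.mem_sup_right hv)
      have h2 : (y + z) * u = 0 := by
        have hyz : y + z ∈ I ⊔ K := TwoSidedIdeal.mem_sup.2 ⟨y, hy, z, hz, rfl⟩
        exact mul_eq_zero_of_mulClosure hB hyz hu
      have heq : (y + z) * (u + v) = z * v := by
        rw [mul_add, h2, zero_add, add_mul, h1, zero_add]
      rw [heq]
      exact TwoSidedIdeal.mul_mem_left _ _ _ hv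
    rcases hwK.2.2 (I ⊔ K) (J ⊔ K) hIK' hJK' hne hsub with h | h
    · exact hIK (le_trans le_sup_left h)
    · exact hJK (le_trans le_sup_left h)
  -- hence K² = 0 and K ≤ GN(R), contradiction
  have hKK : mulClosure (K : Set R) (K : Set R) = ⊥ := by
    refine mulClosure_eq_bot ?_
    intro p hp q hq
    exact mul_eq_zero_of_mulClosure hC (TwoSidedIdeal.mem_sup_right hp)
      (TwoSidedIdeal.mem_sup_right hq)
  have hle : K ≤ gradedNilSum 𝒜 := le_sSup ⟨hK, hKK⟩
  exact absurd (hlt.trans_le hle) (lt_irrefl _)
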